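/- (Edge Removal Lemma) Let r be a vertex of a connected graph G and let e be an edge joining two neighbors of r. Then π(G,r) = π(G−e,r). -/

import Mathlib

open SimpleGraph

/-- A single pebbling step: remove two pebbles from `u`, add one to a neighbor `v`. -/
def PebStep {V : Type} (G : SimpleGraph V) (C C' : V → ℕ) : Prop :=
  ∃ u v : V, G.Adj u v ∧ 2 ≤ C u ∧
    C' u + 2 = C u ∧ C' v = C v + 1 ∧ ∀ w, w ≠ u → w ≠ v → C' w = C w

/-- `C` is `t`-fold `r`-solvable. -/
def TSolvable {V : Type} (G : SimpleGraph V) (C : V → ℕ) (r : V) (t : ℕ) : Prop :=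
  ∃ C', Relation.ReflTransGen (PebStep G) C C' ∧ t ≤ C' r

/-- The `t`-pebbling number of `G` rooted at `r`. -/
noncomputable def piT {V : Type} (G : SimpleGraph V) (r : V) (t : ℕ) : ℕ :=
  sInf {s | ∀ C : V → ℕ, s ≤ ∑ᶠ v, C v → TSolvable G C r t}

/-- The pebbling number of `G` rooted at `r`. -/
noncomputable def pin {V : Type} (G : SimpleGraph V) (r : V) : ℕ := piT G r 1

/-- The `t`-pebbling number of `G`. -/
noncomputable def piGt {V : Type} (G : SimpleGraph V) (t : ℕ) : ℕ := ⨆ r, piT G r t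

/-- The pebbling number of `G`. -/
noncomputable def piG {V : Type} (G : SimpleGraph V) : ℕ := ⨆ r, pin G r

/-- Eccentricity of `r`. -/
noncomputable def eccG {V : Type} (G : SimpleGraph V) (r : V) : ℕ := ⨆ v, G.dist r v

/-- Diameter of `G`. -/
noncomputable def diamG {V : Type} (G : SimpleGraph V) : ℕ := ⨆ u, eccG G u

/-- Edge Removal Lemma: deleting an edge joining two neighbors of the
root `r` does not change the rooted pebbling number. -/
theorem edge_removal {V : Type} (G : SimpleGraph V) (hG : G.Connected) (r u v : V)
    (hru : G.Adj r u) (hrv : G.Adj r v) (huv : G.Adj u v) :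
    pin G r = pin (G.deleteEdges {s(u, v)}) r := by
  have hrune : r ≠ u := hru.ne
  have hrvne : r ≠ v := hrv.ne
  classical
  unfold pin piT
  congr 1
  ext s
  simp only [Set.mem_setOf_eq]
  constructor
  · intro h C hs
    obtain ⟨C', hsteps, hr⟩ := h C hs
    clear hs h
    induction hsteps using Relation.ReflTransGen.head_induction_on with
    | refl => exact ⟨C', Relation.ReflTransGen.refl, hr⟩
    | head step rest ih =>
      rename_i C D
      obtain ⟨a, b, hab, h2, ha, hb, hrest⟩ := step
      by_cases hcase : s(a, b) = s(u, v)
      · -- replace the step across uv by a step to r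
        have hra : G.Adj r a := by
          rcases Sym2.eq_iff.mp hcase with ⟨h1, h2⟩ | ⟨h1, h2⟩ <;> subst h1 <;>
            assumption
        have hrane : r ≠ a := hra.ne
        have harV : (G.deleteEdges {s(u, v)}).Adj a r := by
          rw [SimpleGraph.deleteEdges_adj]
          refine ⟨hra.symm, ?_⟩
          simp only [Set.mem_singleton_iff, Sym2.eq_iff]
          rintro (⟨h1, h2⟩ | ⟨h1, h2⟩) <;> simp_all
        refine ⟨fun w => if w = a then C a - 2 else if w = r then C r + 1 else C w,
          Relation.ReflTransGen.single ⟨a, r, harV, h2, ?_, ?_, ?_⟩, ?_⟩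
        · simp [Nat.sub_add_cancel h2]
        · simp [hrane, (Ne.symm hrane)]
        · intro w hwa hwr; simp [hwa, hwr]
        · simp [hrane]
      · -- the step is present in G − e
        obtain ⟨C'', st, hCr⟩ := ih
        refine ⟨C'', Relation.ReflTransGen.head ⟨a, b, ?_, h2, ha, hb, hrest⟩ st, hCr⟩
        rw [SimpleGraph.deleteEdges_adj]
        exact ⟨hab, by simpa using hcase⟩
  · intro h C hs
    obtain ⟨C', hsteps, hr⟩ := h C hs
    refine ⟨C', Relation.ReflTransGen.mono ?_ _ _ hsteps, hr⟩
    rintro x y ⟨a, b, hab, rest⟩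
    exact ⟨a, b, (SimpleGraph.deleteEdges_adj.mp hab).1, rest⟩
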